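/- Let c ∈ ℝ and let φ, ρ : [0,π] → ℝ be continuously differentiable. Set φ_n^D(x) := √(2/π) sin(nx) and ψ_n(x) := (n²+c²)^{−1/2} √(2/π)(n cos(nx) + c sin(nx)); define γ_n^D(f) := ∫₀^π f φ_n^D and γ_n^R(f) := ∫₀^π f ψ_n. For t > 0 set β_R(t) := ∑_{n=1}^∞ e^{−t(n²+c²)} γ_n^R(φ) γ_n^R(ρ). Then for every t > 0 the series converges, β_R is differentiable at t, and β_R'(t) = −∑_{n=1}^∞ e^{−t(n²+c²)} γ_n^D(−φ' + cφ) γ_n^D(−ρ' + cρ). -/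

import Mathlib

noncomputable section

/-- Fourier coefficient against the Dirichlet eigenfunction `√(2/π) sin(n x)` on `[0,π]`. -/
def gammaD (n : ℕ) (f : ℝ → ℝ) : ℝ :=
  ∫ x in (0 : ℝ)..Real.pi, f x * (Real.sqrt (2 / Real.pi) * Real.sin ((n : ℝ) * x))

/-- The Robin eigenfunctions `ψ_n = (n²+c²)^{-1/2} A φ_n^D` on `[0,π]`. -/
def robinEigen (c : ℝ) (n : ℕ) (x : ℝ) : ℝ :=
  (Real.sqrt ((n : ℝ) ^ 2 + c ^ 2))⁻¹ * Real.sqrt (2 / Real.pi) *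
    ((n : ℝ) * Real.cos ((n : ℝ) * x) + c * Real.sin ((n : ℝ) * x))

/-- Fourier coefficient against the Robin eigenfunction `ψ_n` on `[0,π]`. -/
def gammaR (c : ℝ) (n : ℕ) (f : ℝ → ℝ) : ℝ :=
  ∫ x in (0 : ℝ)..Real.pi, f x * robinEigen c n x

open MeasureTheory intervalIntegral Set in
/-- Integration by parts: `γ_n^D(A* f) = √λ_n · γ_n^R(f)` for `n ≥ 1`. -/
lemma gammaD_Astar (c : ℝ) (f : ℝ → ℝ) (hf : ContDiffOn ℝ 1 f (Set.Icc 0 Real.pi)) (n : ℕ) :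
    gammaD (n + 1) (fun x => -(deriv f x) + c * f x)
      = Real.sqrt ((((n : ℝ) + 1)) ^ 2 + c ^ 2) * gammaR c (n + 1) f := by
  have hπ : (0 : ℝ) < Real.pi := Real.pi_pos
  set m : ℝ := (n : ℝ) + 1 with hm
  have hmcast : ((n + 1 : ℕ) : ℝ) = m := by push_cast [hm]; ring
  set g : ℝ → ℝ := derivWithin f (Set.Icc 0 Real.pi) with hg
  have huicc : Set.uIcc (0 : ℝ) Real.pi = Set.Icc 0 Real.pi := by
    rw [Set.uIcc_of_le hπ.le]
  have hgc : ContinuousOn g (Set.Icc 0 Real.pi) :=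
    hf.continuousOn_derivWithin (uniqueDiffOn_Icc hπ) le_rfl
  have hfc : ContinuousOn f (Set.Icc 0 Real.pi) := hf.continuousOn
  have hfd : ∀ x ∈ Set.Icc (0:ℝ) Real.pi, HasDerivWithinAt f (g x) (Set.Icc 0 Real.pi) x := by
    intro x hx
    exact ((hf.differentiableOn one_ne_zero) x hx).hasDerivWithinAt
  -- sine kernel and its derivative
  set v : ℝ → ℝ := fun x => Real.sqrt (2 / Real.pi) * Real.sin (m * x) with hv
  set v' : ℝ → ℝ := fun x => Real.sqrt (2 / Real.pi) * (Real.cos (m * x) * m) with hv'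
  have hvd : ∀ x : ℝ, HasDerivAt v (v' x) x := by
    intro x
    have h1 : HasDerivAt (fun y : ℝ => m * y) m x := by
      simpa using (hasDerivAt_id x).const_mul m
    have h2 : HasDerivAt (fun y : ℝ => Real.sin (m * y)) (Real.cos (m * x) * m) x :=
      (Real.hasDerivAt_sin (m * x)).comp x h1
    simpa [hv, hv'] using h2.const_mul (Real.sqrt (2 / Real.pi))
  -- a.e. equality of deriv f and g on the interval
  have hae : ∀ᵐ x ∂(volume : Measure ℝ), x ∈ Set.uIoc (0:ℝ) Real.pi →
      deriv f x * v x = g x * v x := by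
    have hmem : ∀ᵐ x ∂(volume : Measure ℝ), x ≠ Real.pi :=
      ae_iff.2 (by simpa using measure_singleton (Real.pi : ℝ))
    filter_upwards [hmem] with x hx hxI
    rw [Set.uIoc_of_le hπ.le] at hxI
    have hxo : x ∈ Set.Ioo (0:ℝ) Real.pi := ⟨hxI.1, lt_of_le_of_ne hxI.2 hx⟩
    have : derivWithin f (Set.Icc 0 Real.pi) x = deriv f x :=
      derivWithin_of_mem_nhds (Icc_mem_nhds hxo.1 hxo.2)
    rw [hg, this]
  -- integrabilities
  have hgv_int : IntervalIntegrable (fun x => g x * v x) volume 0 Real.pi := by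
    apply ContinuousOn.intervalIntegrable
    rw [huicc]
    exact hgc.mul (Continuous.continuousOn (by fun_prop))
  have hdv_int : IntervalIntegrable (fun x => deriv f x * v x) volume 0 Real.pi := by
    rw [intervalIntegrable_iff] at hgv_int ⊢
    exact hgv_int.congr_fun_ae ((ae_restrict_iff' measurableSet_uIoc).2 <| by
      filter_upwards [hae] with x hx hxI using (hx hxI).symm)
  have hfv_int : IntervalIntegrable (fun x => f x * v x) volume 0 Real.pi := by
    apply ContinuousOn.intervalIntegrable
    rw [huicc]
    exact hfc.mul (Continuous.continuousOn (by fun_prop))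
  have hfv'_int : IntervalIntegrable (fun x => f x * v' x) volume 0 Real.pi := by
    apply ContinuousOn.intervalIntegrable
    rw [huicc]
    exact hfc.mul (Continuous.continuousOn (by fun_prop))
  have hv'_int : IntervalIntegrable v' volume 0 Real.pi :=
    (Continuous.intervalIntegrable (by fun_prop) _ _)
  have hg_int : IntervalIntegrable g volume 0 Real.pi := by
    apply ContinuousOn.intervalIntegrable; rw [huicc]; exact hgc
  -- integration by parts
  have hIBP : ∫ x in (0:ℝ)..Real.pi, (g x * v x + f x * v' x)
      = f Real.pi * v Real.pi - f 0 * v 0 := by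
    apply integral_deriv_mul_eq_sub_of_hasDerivWithinAt
    · intro x hx; rw [huicc] at hx ⊢; exact hfd x hx
    · intro x hx; rw [huicc]; exact (hvd x).hasDerivWithinAt
    · exact hg_int
    · exact hv'_int
  have hsin0 : Real.sin (m * Real.pi) = 0 := by
    rw [← hmcast]; exact Real.sin_nat_mul_pi (n + 1)
  have hbd : f Real.pi * v Real.pi - f 0 * v 0 = 0 := by
    simp [hv, hsin0]
  have hsplit : (∫ x in (0:ℝ)..Real.pi, g x * v x) + ∫ x in (0:ℝ)..Real.pi, f x * v' x = 0 := by
    rw [← integral_add hgv_int hfv'_int, hIBP, hbd]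
  have hdvg : (∫ x in (0:ℝ)..Real.pi, deriv f x * v x)
      = ∫ x in (0:ℝ)..Real.pi, g x * v x :=
    integral_congr_ae hae
  -- positivity of λ
  have hlp : (0:ℝ) < m ^ 2 + c ^ 2 := by positivity
  have hsq : Real.sqrt (m ^ 2 + c ^ 2) * Real.sqrt (m ^ 2 + c ^ 2) = m ^ 2 + c ^ 2 :=
    Real.mul_self_sqrt hlp.le
  have hsqrt_ne : Real.sqrt (m ^ 2 + c ^ 2) ≠ 0 := by
    have := Real.sqrt_pos.2 hlp; linarith
  -- compute
  have hlhs : gammaD (n + 1) (fun x => -(deriv f x) + c * f x)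
      = (c * ∫ x in (0:ℝ)..Real.pi, f x * v x) - ∫ x in (0:ℝ)..Real.pi, deriv f x * v x := by
    rw [gammaD]
    have : ∀ x : ℝ, (-(deriv f x) + c * f x) * (Real.sqrt (2 / Real.pi) * Real.sin (((n+1:ℕ):ℝ) * x))
        = c * (f x * v x) - deriv f x * v x := by
      intro x; rw [hmcast]; simp [hv]; ring
    simp_rw [this]
    rw [intervalIntegral.integral_sub (hfv_int.const_mul c) hdv_int, intervalIntegral.integral_const_mul]
  have hrhs : Real.sqrt ((m:ℝ) ^ 2 + c ^ 2) * gammaR c (n + 1) f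
      = (∫ x in (0:ℝ)..Real.pi, f x * v' x) + c * ∫ x in (0:ℝ)..Real.pi, f x * v x := by
    rw [gammaR, ← intervalIntegral.integral_const_mul]
    have : ∀ x : ℝ, Real.sqrt ((m:ℝ) ^ 2 + c ^ 2) * (f x * robinEigen c (n+1) x)
        = f x * v' x + c * (f x * v x) := by
      intro x
      rw [robinEigen, hmcast]
      field_simp [hv, hv']
      ring
    simp_rw [this]
    rw [integral_add hfv'_int (hfv_int.const_mul c), intervalIntegral.integral_const_mul]
  rw [hlhs, hrhs, hdvg]
  linarith

open intervalIntegral in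
/-- Uniform bound on the Robin Fourier coefficients. -/
lemma gammaR_bound (c : ℝ) (f : ℝ → ℝ) (M : ℝ) (hM : ∀ x ∈ Set.Icc 0 Real.pi, |f x| ≤ M)
    (n : ℕ) : |gammaR c (n + 1) f| ≤ M * (2 * Real.sqrt (2 / Real.pi)) * Real.pi := by
  have hπ : (0 : ℝ) < Real.pi := Real.pi_pos
  set m : ℝ := ((n + 1 : ℕ) : ℝ) with hm
  have hm1 : (1:ℝ) ≤ m := by rw [hm]; exact_mod_cast Nat.one_le_iff_ne_zero.2 (Nat.succ_ne_zero n)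
  have hlp : (0:ℝ) < m ^ 2 + c ^ 2 := by nlinarith
  have hsl : (0:ℝ) < Real.sqrt (m ^ 2 + c ^ 2) := Real.sqrt_pos.2 hlp
  have hmle : m ≤ Real.sqrt (m ^ 2 + c ^ 2) := by
    calc m = Real.sqrt (m ^ 2) := (Real.sqrt_sq (by linarith)).symm
      _ ≤ Real.sqrt (m ^ 2 + c ^ 2) := Real.sqrt_le_sqrt (by nlinarith)
  have hcle : |c| ≤ Real.sqrt (m ^ 2 + c ^ 2) := by
    calc |c| = Real.sqrt (c ^ 2) := (Real.sqrt_sq_eq_abs c).symm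
      _ ≤ Real.sqrt (m ^ 2 + c ^ 2) := Real.sqrt_le_sqrt (by nlinarith)
  have hψ : ∀ x : ℝ, |robinEigen c (n + 1) x| ≤ 2 * Real.sqrt (2 / Real.pi) := by
    intro x
    rw [robinEigen]
    have h1 : |m * Real.cos (m * x) + c * Real.sin (m * x)|
        ≤ 2 * Real.sqrt (m ^ 2 + c ^ 2) := by
      calc |m * Real.cos (m * x) + c * Real.sin (m * x)|
          ≤ |m * Real.cos (m * x)| + |c * Real.sin (m * x)| := abs_add_le _ _
        _ ≤ m * 1 + |c| * 1 := by
            rw [abs_mul, abs_mul, abs_of_nonneg (show (0:ℝ) ≤ m by linarith)]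
            have h1 := mul_le_mul_of_nonneg_left (Real.abs_cos_le_one (m*x))
              (show (0:ℝ) ≤ m by linarith)
            have h2 := mul_le_mul_of_nonneg_left (Real.abs_sin_le_one (m*x)) (abs_nonneg c)
            linarith
        _ ≤ 2 * Real.sqrt (m ^ 2 + c ^ 2) := by rw [mul_one, mul_one]; linarith
    rw [abs_mul, abs_mul, abs_of_nonneg (by positivity : (0:ℝ) ≤ (Real.sqrt (m^2+c^2))⁻¹),
      abs_of_nonneg (Real.sqrt_nonneg _)]
    calc (Real.sqrt (m^2+c^2))⁻¹ * Real.sqrt (2/Real.pi) * |m * Real.cos (m*x) + c * Real.sin (m*x)|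
        ≤ (Real.sqrt (m^2+c^2))⁻¹ * Real.sqrt (2/Real.pi) * (2 * Real.sqrt (m^2+c^2)) := by
          gcongr
      _ = 2 * Real.sqrt (2/Real.pi) := by field_simp
  have hM0 : 0 ≤ M := le_trans (abs_nonneg _) (hM 0 ⟨le_rfl, hπ.le⟩)
  have key : ‖∫ x in (0:ℝ)..Real.pi, f x * robinEigen c (n+1) x‖
      ≤ M * (2 * Real.sqrt (2 / Real.pi)) * |Real.pi - 0| := by
    apply norm_integral_le_of_norm_le_const
    intro x hx
    rw [Set.uIoc_of_le hπ.le] at hx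
    have hxI : x ∈ Set.Icc (0:ℝ) Real.pi := ⟨hx.1.le, hx.2⟩
    rw [Real.norm_eq_abs, abs_mul]
    exact mul_le_mul (hM x hxI) (hψ x) (abs_nonneg _) hM0
  rw [gammaR]
  simpa [abs_of_nonneg hπ.le] using key

theorem robin_heat_content_deriv (c : ℝ) (φ ρ : ℝ → ℝ)
    (hφ : ContDiffOn ℝ 1 φ (Set.Icc 0 Real.pi)) (hρ : ContDiffOn ℝ 1 ρ (Set.Icc 0 Real.pi)) :
    ∀ t : ℝ, 0 < t →
      (Summable fun n : ℕ =>
        Real.exp (-t * (((n : ℝ) + 1) ^ 2 + c ^ 2)) *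
          gammaR c (n + 1) φ * gammaR c (n + 1) ρ) ∧
      HasDerivAt
        (fun s : ℝ => ∑' n : ℕ,
          Real.exp (-s * (((n : ℝ) + 1) ^ 2 + c ^ 2)) *
            gammaR c (n + 1) φ * gammaR c (n + 1) ρ)
        (-∑' n : ℕ,
          Real.exp (-t * (((n : ℝ) + 1) ^ 2 + c ^ 2)) *
            gammaD (n + 1) (fun x => -(deriv φ x) + c * φ x) *
            gammaD (n + 1) (fun x => -(deriv ρ x) + c * ρ x))
        t := by
  intro t ht
  have hπ : (0 : ℝ) < Real.pi := Real.pi_pos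
  -- uniform bounds on sup norms
  obtain ⟨Mφ, hMφ⟩ := isCompact_Icc.exists_bound_of_continuousOn hφ.continuousOn
  obtain ⟨Mρ, hMρ⟩ := isCompact_Icc.exists_bound_of_continuousOn hρ.continuousOn
  set Gφ : ℝ := Mφ * (2 * Real.sqrt (2 / Real.pi)) * Real.pi with hGφ
  set Gρ : ℝ := Mρ * (2 * Real.sqrt (2 / Real.pi)) * Real.pi with hGρ
  have hγφ : ∀ n : ℕ, |gammaR c (n + 1) φ| ≤ Gφ :=
    fun n => gammaR_bound c φ Mφ (fun x hx => by simpa [Real.norm_eq_abs] using hMφ x hx) n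
  have hγρ : ∀ n : ℕ, |gammaR c (n + 1) ρ| ≤ Gρ :=
    fun n => gammaR_bound c ρ Mρ (fun x hx => by simpa [Real.norm_eq_abs] using hMρ x hx) n
  have hGφ0 : 0 ≤ Gφ := le_trans (abs_nonneg _) (hγφ 0)
  have hGρ0 : 0 ≤ Gρ := le_trans (abs_nonneg _) (hγρ 0)
  set lam : ℕ → ℝ := fun n => ((n : ℝ) + 1) ^ 2 + c ^ 2 with hlam
  have hlam_pos : ∀ n : ℕ, (0:ℝ) < lam n := fun n => by positivity
  have hlam_ge : ∀ n : ℕ, (n : ℝ) ≤ lam n := by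
    intro n
    simp only [hlam]
    nlinarith [sq_nonneg ((n:ℝ)), sq_nonneg c]
  -- terms
  set g : ℕ → ℝ → ℝ := fun n s =>
    Real.exp (-s * lam n) * gammaR c (n + 1) φ * gammaR c (n + 1) ρ with hgdef
  set g' : ℕ → ℝ → ℝ := fun n s =>
    -lam n * Real.exp (-s * lam n) * gammaR c (n + 1) φ * gammaR c (n + 1) ρ with hg'def
  have hgderiv : ∀ n : ℕ, ∀ s : ℝ, HasDerivAt (g n) (g' n s) s := by
    intro n s
    have h1 : HasDerivAt (fun y : ℝ => -y * lam n) (-lam n) s := by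
      simpa using ((hasDerivAt_id s).neg.mul_const (lam n))
    have h2 : HasDerivAt (fun y : ℝ => Real.exp (-y * lam n))
        (Real.exp (-s * lam n) * -lam n) s := h1.exp
    have h3 := (h2.mul_const (gammaR c (n + 1) φ)).mul_const (gammaR c (n + 1) ρ)
    exact h3.congr_deriv (by simp only [hg'def]; ring)
  -- summability at t
  have hterm_bound : ∀ n : ℕ, |g n t| ≤ Gφ * Gρ * Real.exp (-t) ^ n := by
    intro n
    have hexp : Real.exp (-t * lam n) ≤ Real.exp (-t) ^ n := by
      rw [← Real.exp_nat_mul]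
      apply Real.exp_le_exp.2
      have h := mul_le_mul_of_nonneg_left (hlam_ge n) ht.le
      nlinarith [h]
    calc |g n t| = Real.exp (-t * lam n) * |gammaR c (n + 1) φ| * |gammaR c (n + 1) ρ| := by
          rw [hgdef]; simp [abs_mul, Real.abs_exp]
      _ ≤ Real.exp (-t) ^ n * Gφ * Gρ := by
          apply mul_le_mul _ (hγρ n) (abs_nonneg _)
          · positivity
          · exact mul_le_mul hexp (hγφ n) (abs_nonneg _) (by positivity)
      _ = Gφ * Gρ * Real.exp (-t) ^ n := by ring
  have hq1 : Real.exp (-t) < 1 := Real.exp_lt_one_iff.2 (by linarith)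
  have hgeom : Summable (fun n : ℕ => Gφ * Gρ * Real.exp (-t) ^ n) :=
    (summable_geometric_of_lt_one (Real.exp_nonneg _) hq1).mul_left _
  have hsum_t : Summable (fun n : ℕ => g n t) := by
    apply Summable.of_abs
    exact Summable.of_nonneg_of_le (fun n => abs_nonneg _) hterm_bound hgeom
  -- bound on derivatives over Ioi (t/2)
  set q : ℝ := Real.exp (-(t / 4)) with hqdef
  have hq0 : (0:ℝ) ≤ q := Real.exp_nonneg _
  have hql1 : q < 1 := Real.exp_lt_one_iff.2 (by linarith)
  set u : ℕ → ℝ := fun n => 4 / t * Gφ * Gρ * q ^ n with hudef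
  have hu_sum : Summable u := (summable_geometric_of_lt_one hq0 hql1).mul_left _
  have hbound : ∀ n : ℕ, ∀ s ∈ Set.Ioi (t / 2), ‖g' n s‖ ≤ u n := by
    intro n s hs
    have hs2 : t / 2 < s := hs
    have h1 : Real.exp (-s * lam n) ≤ Real.exp (-(t / 2) * lam n) := by
      apply Real.exp_le_exp.2
      have h := mul_le_mul_of_nonneg_right hs2.le (hlam_pos n).le
      nlinarith [h]
    have h2 : lam n * Real.exp (-(t / 4) * lam n) ≤ 4 / t := by
      have hx : t / 4 * lam n ≤ Real.exp (t / 4 * lam n) := by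
        have := Real.add_one_le_exp (t / 4 * lam n); linarith
      have hexp_pos : (0:ℝ) < Real.exp (-(t / 4) * lam n) := Real.exp_pos _
      have hmul : Real.exp (t / 4 * lam n) * Real.exp (-(t / 4) * lam n) = 1 := by
        rw [← Real.exp_add]; ring_nf; exact Real.exp_zero
      have h4t : (0:ℝ) < 4 / t := by positivity
      -- lam n ≤ (4/t) * exp(t/4 * lam n)
      have hl : lam n ≤ 4 / t * Real.exp (t / 4 * lam n) := by
        have := hx
        calc lam n = 4 / t * (t / 4 * lam n) := by field_simp
          _ ≤ 4 / t * Real.exp (t / 4 * lam n) := by gcongr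
      calc lam n * Real.exp (-(t / 4) * lam n)
          ≤ (4 / t * Real.exp (t / 4 * lam n)) * Real.exp (-(t / 4) * lam n) := by gcongr
        _ = 4 / t * (Real.exp (t / 4 * lam n) * Real.exp (-(t / 4) * lam n)) := by ring
        _ = 4 / t := by rw [hmul, mul_one]
    have h3 : Real.exp (-(t / 4) * lam n) ≤ q ^ n := by
      rw [hqdef, ← Real.exp_nat_mul]
      apply Real.exp_le_exp.2
      have h := mul_le_mul_of_nonneg_left (hlam_ge n) (show (0:ℝ) ≤ t/4 by linarith)
      nlinarith [h]
    have hsplit : Real.exp (-(t / 2) * lam n)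
        = Real.exp (-(t / 4) * lam n) * Real.exp (-(t / 4) * lam n) := by
      rw [← Real.exp_add]; ring_nf
    have hlamexp : lam n * Real.exp (-(t / 2) * lam n) ≤ 4 / t * q ^ n := by
      rw [hsplit]
      calc lam n * (Real.exp (-(t / 4) * lam n) * Real.exp (-(t / 4) * lam n))
          = (lam n * Real.exp (-(t / 4) * lam n)) * Real.exp (-(t / 4) * lam n) := by ring
        _ ≤ (4 / t) * q ^ n := by
            exact mul_le_mul h2 h3 (Real.exp_nonneg _) (by positivity)
    calc ‖g' n s‖ = lam n * Real.exp (-s * lam n) * |gammaR c (n + 1) φ| * |gammaR c (n+1) ρ| := by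
          rw [hg'def, Real.norm_eq_abs]
          simp [abs_mul, Real.abs_exp, abs_of_pos (hlam_pos n)]
      _ ≤ lam n * Real.exp (-(t/2) * lam n) * Gφ * Gρ := by
          apply mul_le_mul _ (hγρ n) (abs_nonneg _)
          · positivity
          · apply mul_le_mul _ (hγφ n) (abs_nonneg _)
            · positivity
            · exact mul_le_mul_of_nonneg_left h1 (hlam_pos n).le
      _ ≤ (4 / t * q ^ n) * Gφ * Gρ := by gcongr
      _ = u n := by rw [hudef]; ring
  have hderiv : HasDerivAt (fun s : ℝ => ∑' n : ℕ, g n s) (∑' n : ℕ, g' n t) t := by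
    apply hasDerivAt_tsum_of_isPreconnected hu_sum (isOpen_Ioi (a := t / 2))
      (isPreconnected_Ioi)
      (fun n y _ => hgderiv n y) (fun n y hy => hbound n y hy)
      (Set.mem_Ioi.2 (by linarith)) hsum_t (Set.mem_Ioi.2 (by linarith))
  -- identify g' with the Dirichlet expression
  have hkey : ∀ n : ℕ, g' n t
      = -(Real.exp (-t * lam n) *
          gammaD (n + 1) (fun x => -(deriv φ x) + c * φ x) *
          gammaD (n + 1) (fun x => -(deriv ρ x) + c * ρ x)) := by
    intro n
    rw [gammaD_Astar c φ hφ n, gammaD_Astar c ρ hρ n, hg'def]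
    have hsq : Real.sqrt (((n:ℝ) + 1) ^ 2 + c ^ 2) * Real.sqrt (((n:ℝ) + 1) ^ 2 + c ^ 2)
        = ((n:ℝ) + 1) ^ 2 + c ^ 2 := Real.mul_self_sqrt (by positivity)
    simp only [hlam]
    linear_combination (Real.exp (-t * (((n:ℝ) + 1) ^ 2 + c ^ 2)) *
      gammaR c (n + 1) φ * gammaR c (n + 1) ρ) * hsq
  constructor
  · exact hsum_t
  · have : (∑' n : ℕ, g' n t)
        = -∑' n : ℕ,
            Real.exp (-t * (((n : ℝ) + 1) ^ 2 + c ^ 2)) *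
              gammaD (n + 1) (fun x => -(deriv φ x) + c * φ x) *
              gammaD (n + 1) (fun x => -(deriv ρ x) + c * ρ x) := by
      rw [← tsum_neg]
      exact tsum_congr fun n => hkey n
    rw [← this]
    exact hderiv
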